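/- Fix α, β ∈ ℝ∖{0}, x₁, x₂ ∈ ℝ and (t,x) ∈ ℝ². For 0 < μ < √(α²+β²)/2 let B_μ(t,x) be the Gardner breather with 5th-order velocities δ_μ := −α⁴ + 10α²β² − 5β⁴ − 10μ²(3β² − α²) and γ_μ := −β⁴ + 10α²β² − 5α⁴ − 10μ²(β² − 3α²). Then as μ → 0⁺, B_μ(t,x) converges to B₀(t,x), the 5th-order mKdV breather 2∂ₓ arctan((β/α)·sin(α(x + δ₀t + x₁))/cosh(β(x + γ₀t + x₂))) with δ₀ := −α⁴ + 10α²β² − 5β⁴, γ₀ := −β⁴ + 10α²β² − 5α⁴. -/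

import Mathlib

open Real Filter

noncomputable def gardnerG (α β μ δ γ x₁ x₂ : ℝ) (t x : ℝ) : ℝ :=
  (β * Real.sqrt (α ^ 2 + β ^ 2) / (α * Real.sqrt (α ^ 2 + β ^ 2 - 4 * μ ^ 2)))
      * Real.sin (α * (x + δ * t + x₁))
    - (2 * β * μ / (α ^ 2 + β ^ 2 - 4 * μ ^ 2)) * Real.exp (β * (x + γ * t + x₂))

noncomputable def gardnerF (α β μ δ γ x₁ x₂ : ℝ) (t x : ℝ) : ℝ :=
  Real.cosh (β * (x + γ * t + x₂))
    - (2 * β * μ / (α * Real.sqrt (α ^ 2 + β ^ 2 - 4 * μ ^ 2) * Real.sqrt (α ^ 2 + β ^ 2)))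
      * (α * Real.cos (α * (x + δ * t + x₁)) - β * Real.sin (α * (x + δ * t + x₁)))

/-- The Gardner breather `B = 2 (Gₓ F - G Fₓ)/(F² + G²)`. -/
noncomputable def gardnerB (α β μ δ γ x₁ x₂ : ℝ) (t x : ℝ) : ℝ :=
  2 * (deriv (gardnerG α β μ δ γ x₁ x₂ t) x * gardnerF α β μ δ γ x₁ x₂ t x
      - gardnerG α β μ δ γ x₁ x₂ t x * deriv (gardnerF α β μ δ γ x₁ x₂ t) x)
    / ((gardnerF α β μ δ γ x₁ x₂ t x) ^ 2 + (gardnerG α β μ δ γ x₁ x₂ t x) ^ 2)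

/-- Partial derivative in `x`. -/
noncomputable def pdx (u : ℝ → ℝ → ℝ) (t x : ℝ) : ℝ := deriv (u t) x

/-- `n`-th iterated partial derivative in `x`. -/
noncomputable def pdxn (n : ℕ) (u : ℝ → ℝ → ℝ) (t x : ℝ) : ℝ := deriv^[n] (u t) x

/-- Partial derivative in `t`. -/
noncomputable def pdt (u : ℝ → ℝ → ℝ) (t x : ℝ) : ℝ := deriv (fun s => u s x) t

lemma hasDerivAt_inner' (a c : ℝ) (x : ℝ) :
    HasDerivAt (fun x : ℝ => a * (x + c)) a x := by
  simpa using ((hasDerivAt_id x).add_const c).const_mul a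

lemma hasDerivAt_inner (a b c : ℝ) (x : ℝ) :
    HasDerivAt (fun x : ℝ => a * (x + b + c)) a x := by
  simpa [add_assoc] using hasDerivAt_inner' a (b + c) x

lemma deriv_gardnerG (α β μ δ γ x₁ x₂ t x : ℝ) :
    deriv (gardnerG α β μ δ γ x₁ x₂ t) x =
      (β * Real.sqrt (α ^ 2 + β ^ 2) / (α * Real.sqrt (α ^ 2 + β ^ 2 - 4 * μ ^ 2)))
          * (Real.cos (α * (x + δ * t + x₁)) * α)
        - (2 * β * μ / (α ^ 2 + β ^ 2 - 4 * μ ^ 2)) * (Real.exp (β * (x + γ * t + x₂)) * β) := by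
  refine HasDerivAt.deriv ?_
  exact (((Real.hasDerivAt_sin _).comp x (hasDerivAt_inner α (δ * t) x₁ x)).const_mul _).sub
    (((Real.hasDerivAt_exp _).comp x (hasDerivAt_inner β (γ * t) x₂ x)).const_mul _)

lemma deriv_gardnerF (α β μ δ γ x₁ x₂ t x : ℝ) :
    deriv (gardnerF α β μ δ γ x₁ x₂ t) x =
      Real.sinh (β * (x + γ * t + x₂)) * β
        - (2 * β * μ / (α * Real.sqrt (α ^ 2 + β ^ 2 - 4 * μ ^ 2) * Real.sqrt (α ^ 2 + β ^ 2)))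
          * (α * (-Real.sin (α * (x + δ * t + x₁)) * α)
             - β * (Real.cos (α * (x + δ * t + x₁)) * α)) := by
  refine HasDerivAt.deriv ?_
  exact ((Real.hasDerivAt_cosh _).comp x (hasDerivAt_inner β (γ * t) x₂ x)).sub
    (((((Real.hasDerivAt_cos _).comp x (hasDerivAt_inner α (δ * t) x₁ x)).const_mul α).sub
      (((Real.hasDerivAt_sin _).comp x (hasDerivAt_inner α (δ * t) x₁ x)).const_mul β)).const_mul _)

theorem gardner_breather_converges_to_mkdv_breather
    (α β x₁ x₂ t x : ℝ) (hα : α ≠ 0) (hβ : β ≠ 0) :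
    Filter.Tendsto
      (fun μ : ℝ => gardnerB α β μ
        (-α ^ 4 + 10 * α ^ 2 * β ^ 2 - 5 * β ^ 4 - 10 * μ ^ 2 * (3 * β ^ 2 - α ^ 2))
        (-β ^ 4 + 10 * α ^ 2 * β ^ 2 - 5 * α ^ 4 - 10 * μ ^ 2 * (β ^ 2 - 3 * α ^ 2))
        x₁ x₂ t x)
      (nhdsWithin 0 (Set.Ioo 0 (Real.sqrt (α ^ 2 + β ^ 2) / 2)))
      (nhds (2 * deriv (fun y =>
        Real.arctan ((β / α) *
          Real.sin (α * (y + (-α ^ 4 + 10 * α ^ 2 * β ^ 2 - 5 * β ^ 4) * t + x₁)) /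
          Real.cosh (β * (y + (-β ^ 4 + 10 * α ^ 2 * β ^ 2 - 5 * α ^ 4) * t + x₂)))) x)) := by
  have hs : (0:ℝ) < α ^ 2 + β ^ 2 := by positivity
  have hrs : Real.sqrt (α ^ 2 + β ^ 2) ≠ 0 := (Real.sqrt_pos.mpr hs).ne'
  set δ₀ : ℝ := -α ^ 4 + 10 * α ^ 2 * β ^ 2 - 5 * β ^ 4 with hδ₀
  set γ₀ : ℝ := -β ^ 4 + 10 * α ^ 2 * β ^ 2 - 5 * α ^ 4 with hγ₀
  set δf : ℝ → ℝ := fun μ => δ₀ - 10 * μ ^ 2 * (3 * β ^ 2 - α ^ 2) with hδf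
  set γf : ℝ → ℝ := fun μ => γ₀ - 10 * μ ^ 2 * (β ^ 2 - 3 * α ^ 2) with hγf
  set Y₁ : ℝ := α * (x + δ₀ * t + x₁) with hY₁
  set Y₂ : ℝ := β * (x + γ₀ * t + x₂) with hY₂
  -- limits of coefficients
  have hq : Tendsto (fun μ : ℝ => α ^ 2 + β ^ 2 - 4 * μ ^ 2) (nhds 0)
      (nhds (α ^ 2 + β ^ 2)) :=
    Continuous.tendsto' (by fun_prop) 0 _ (by norm_num)
  have hr : Tendsto (fun μ : ℝ => Real.sqrt (α ^ 2 + β ^ 2 - 4 * μ ^ 2)) (nhds 0)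
      (nhds (Real.sqrt (α ^ 2 + β ^ 2))) :=
    (Real.continuous_sqrt.tendsto _).comp hq
  have ha₁ : Tendsto (fun μ : ℝ => β * Real.sqrt (α ^ 2 + β ^ 2)
      / (α * Real.sqrt (α ^ 2 + β ^ 2 - 4 * μ ^ 2))) (nhds 0) (nhds (β / α)) := by
    have h := Filter.Tendsto.div (tendsto_const_nhds
        (x := β * Real.sqrt (α ^ 2 + β ^ 2))) (hr.const_mul α) (mul_ne_zero hα hrs)
    simpa [Pi.div_def, mul_div_mul_right _ _ hrs] using h
  have ha₂ : Tendsto (fun μ : ℝ => 2 * β * μ / (α ^ 2 + β ^ 2 - 4 * μ ^ 2)) (nhds 0)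
      (nhds 0) := by
    have h := Filter.Tendsto.div
      (Continuous.tendsto' (f := fun μ : ℝ => 2 * β * μ) (by fun_prop) 0 0 (by norm_num))
      hq hs.ne'
    simpa [Pi.div_def] using h
  have ha₃ : Tendsto (fun μ : ℝ => 2 * β * μ
      / (α * Real.sqrt (α ^ 2 + β ^ 2 - 4 * μ ^ 2) * Real.sqrt (α ^ 2 + β ^ 2))) (nhds 0)
      (nhds 0) := by
    have h := Filter.Tendsto.div
      (Continuous.tendsto' (f := fun μ : ℝ => 2 * β * μ) (by fun_prop) 0 0 (by norm_num))
      ((hr.const_mul α).mul_const (Real.sqrt (α ^ 2 + β ^ 2)))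
      (mul_ne_zero (mul_ne_zero hα hrs) hrs)
    simpa [Pi.div_def] using h
  -- limits of trig/hyperbolic pieces
  have hsin : Tendsto (fun μ : ℝ => Real.sin (α * (x + δf μ * t + x₁))) (nhds 0)
      (nhds (Real.sin Y₁)) :=
    Continuous.tendsto' (by fun_prop) 0 _ (by simp [hδf, hY₁])
  have hcos : Tendsto (fun μ : ℝ => Real.cos (α * (x + δf μ * t + x₁))) (nhds 0)
      (nhds (Real.cos Y₁)) :=
    Continuous.tendsto' (by fun_prop) 0 _ (by simp [hδf, hY₁])
  have hexp : Tendsto (fun μ : ℝ => Real.exp (β * (x + γf μ * t + x₂))) (nhds 0)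
      (nhds (Real.exp Y₂)) :=
    Continuous.tendsto' (by fun_prop) 0 _ (by simp [hγf, hY₂])
  have hcosh : Tendsto (fun μ : ℝ => Real.cosh (β * (x + γf μ * t + x₂))) (nhds 0)
      (nhds (Real.cosh Y₂)) :=
    Continuous.tendsto' (by fun_prop) 0 _ (by simp [hγf, hY₂])
  have hsinh : Tendsto (fun μ : ℝ => Real.sinh (β * (x + γf μ * t + x₂))) (nhds 0)
      (nhds (Real.sinh Y₂)) :=
    Continuous.tendsto' (by fun_prop) 0 _ (by simp [hγf, hY₂])
  -- limits of G, F and their x-derivatives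
  have hG : Tendsto (fun μ : ℝ => gardnerG α β μ (δf μ) (γf μ) x₁ x₂ t x) (nhds 0)
      (nhds (β / α * Real.sin Y₁)) := by
    simp only [gardnerG]
    simpa using (ha₁.mul hsin).sub (ha₂.mul hexp)
  have hF : Tendsto (fun μ : ℝ => gardnerF α β μ (δf μ) (γf μ) x₁ x₂ t x) (nhds 0)
      (nhds (Real.cosh Y₂)) := by
    simp only [gardnerF]
    simpa using hcosh.sub (ha₃.mul ((hcos.const_mul α).sub (hsin.const_mul β)))
  have hG' : Tendsto (fun μ : ℝ =>
      (β * Real.sqrt (α ^ 2 + β ^ 2) / (α * Real.sqrt (α ^ 2 + β ^ 2 - 4 * μ ^ 2)))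
          * (Real.cos (α * (x + δf μ * t + x₁)) * α)
        - (2 * β * μ / (α ^ 2 + β ^ 2 - 4 * μ ^ 2))
          * (Real.exp (β * (x + γf μ * t + x₂)) * β)) (nhds 0)
      (nhds (β / α * (Real.cos Y₁ * α))) := by
    simpa using (ha₁.mul (hcos.mul_const α)).sub (ha₂.mul (hexp.mul_const β))
  have hF' : Tendsto (fun μ : ℝ =>
      Real.sinh (β * (x + γf μ * t + x₂)) * β
        - (2 * β * μ / (α * Real.sqrt (α ^ 2 + β ^ 2 - 4 * μ ^ 2) * Real.sqrt (α ^ 2 + β ^ 2)))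
          * (α * (-Real.sin (α * (x + δf μ * t + x₁)) * α)
             - β * (Real.cos (α * (x + δf μ * t + x₁)) * α))) (nhds 0)
      (nhds (Real.sinh Y₂ * β)) := by
    simpa using (hsinh.mul_const β).sub
      (ha₃.mul ((((hsin.neg.mul_const α).const_mul α)).sub ((hcos.mul_const α).const_mul β)))
  -- denominator nonzero
  have hDpos : (0:ℝ) < Real.cosh Y₂ ^ 2 + (β / α * Real.sin Y₁) ^ 2 := by
    have := Real.cosh_pos Y₂
    positivity
  have hB : Tendsto (fun μ : ℝ => gardnerB α β μ (δf μ) (γf μ) x₁ x₂ t x) (nhds 0)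
      (nhds (2 * (β / α * (Real.cos Y₁ * α) * Real.cosh Y₂
          - β / α * Real.sin Y₁ * (Real.sinh Y₂ * β))
        / (Real.cosh Y₂ ^ 2 + (β / α * Real.sin Y₁) ^ 2))) := by
    simp only [gardnerB, deriv_gardnerG, deriv_gardnerF]
    exact Filter.Tendsto.div (((hG'.mul hF).sub (hG.mul hF')).const_mul 2)
      ((hF.pow 2).add (hG.pow 2)) hDpos.ne'
  -- identify the limit with the mKdV breather
  have hc : Real.cosh Y₂ ≠ 0 := (Real.cosh_pos Y₂).ne'
  have hgd : HasDerivAt (fun y : ℝ => β / α * Real.sin (α * (y + δ₀ * t + x₁)))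
      (β / α * (Real.cos Y₁ * α)) x :=
    ((Real.hasDerivAt_sin _).comp x (hasDerivAt_inner α (δ₀ * t) x₁ x)).const_mul _
  have hfd : HasDerivAt (fun y : ℝ => Real.cosh (β * (y + γ₀ * t + x₂)))
      (Real.sinh Y₂ * β) x :=
    (Real.hasDerivAt_cosh _).comp x (hasDerivAt_inner β (γ₀ * t) x₂ x)
  have hdiv := hgd.div hfd hc
  have harc : HasDerivAt (fun y : ℝ =>
      Real.arctan (β / α * Real.sin (α * (y + δ₀ * t + x₁))
        / Real.cosh (β * (y + γ₀ * t + x₂))))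
      (1 / (1 + (β / α * Real.sin Y₁ / Real.cosh Y₂) ^ 2)
        * ((β / α * (Real.cos Y₁ * α) * Real.cosh Y₂
            - β / α * Real.sin Y₁ * (Real.sinh Y₂ * β)) / Real.cosh Y₂ ^ 2)) x := by
    simpa [Function.comp_def, Pi.div_def, ← hY₁, ← hY₂] using
      (Real.hasDerivAt_arctan (β / α * Real.sin Y₁ / Real.cosh Y₂)).comp x hdiv
  have h1z : (0:ℝ) < 1 + (β / α * Real.sin Y₁ / Real.cosh Y₂) ^ 2 := by positivity
  have heq : 2 * deriv (fun y : ℝ =>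
      Real.arctan (β / α * Real.sin (α * (y + δ₀ * t + x₁))
        / Real.cosh (β * (y + γ₀ * t + x₂)))) x
      = 2 * (β / α * (Real.cos Y₁ * α) * Real.cosh Y₂
          - β / α * Real.sin Y₁ * (Real.sinh Y₂ * β))
        / (Real.cosh Y₂ ^ 2 + (β / α * Real.sin Y₁) ^ 2) := by
    rw [harc.deriv]
    field_simp [hc, h1z.ne', hDpos.ne']
  rw [heq]
  exact hB.mono_left nhdsWithin_le_nhds
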